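/- Let x be a Lyndon word and u a proper non-empty prefix of x with k ≥ 1. Then (x^k u)^∞ < x^∞, i.e., x^k u ≺ x^k in the infinite ordering. -/
import Mathlib


variable {α : Type*} [LinearOrder α] [Inhabited α]

/-- A Lyndon word: a non-empty word strictly lexicographically smaller than
all its proper non-empty suffixes. -/
def IsLyndon (w : List α) : Prop :=
  w ≠ [] ∧ ∀ v : List α, v ≠ [] → v ≠ w → v <:+ w → List.Lex (· < ·) w v

/-- `wpow x k` is the word `x` repeated `k` times. -/
def wpow (x : List α) (k : ℕ) : List α := (List.replicate k x).flatten

/-- `infWord x` is the infinite word `x^∞` (junk value if `x = []`). -/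
def infWord (x : List α) : ℕ → α := fun i => x.getD (i % x.length) default

/-- Strict lexicographic order on infinite words. -/
def InfLt (f g : ℕ → α) : Prop := ∃ n, (∀ i < n, f i = g i) ∧ f n < g n

/-- The infinite ordering `≺` on non-empty words. -/
def Prec (u v : List α) : Prop :=
  InfLt (infWord u) (infWord v) ∨ (infWord u = infWord v ∧ v.length < u.length)

/-- `u` is strongly less than `v`: they share a common prefix followed by
strictly comparable letters. -/
def StrongLt (u v : List α) : Prop :=
  ∃ (p s t : List α) (a b : α), a < b ∧ u = p ++ a :: s ∧ v = p ++ b :: t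

lemma getD_append_left' (l₁ l₂ : List α) (n : ℕ) (h : n < l₁.length) :
    (l₁ ++ l₂).getD n default = l₁.getD n default := by
  simp [List.getElem?_append_left h]

lemma getD_append_right' (l₁ l₂ : List α) (n : ℕ) (h : l₁.length ≤ n) :
    (l₁ ++ l₂).getD n default = l₂.getD (n - l₁.length) default := by
  simp [List.getElem?_append_right h]

lemma wpow_length (x : List α) (k : ℕ) : (wpow x k).length = k * x.length := by
  simp [wpow, Function.comp]

lemma wpow_succ (x : List α) (k : ℕ) : wpow x (k + 1) = x ++ wpow x k := by
  simp [wpow, List.replicate_succ]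

lemma wpow_getD (x : List α) :
    ∀ k j, j < k * x.length → (wpow x k).getD j default = x.getD (j % x.length) default := by
  intro k
  induction k with
  | zero => intro j hj; omega
  | succ k ih =>
    intro j hj
    rw [wpow_succ]
    rcases lt_or_ge j x.length with h | h
    · rw [getD_append_left' _ _ _ h, Nat.mod_eq_of_lt h]
    · rw [getD_append_right' _ _ _ h, Nat.mod_eq_sub_mod h]
      have hs : (k + 1) * x.length = k * x.length + x.length := Nat.succ_mul k x.length
      exact ih _ (by omega)

lemma lex_char {a b : List α} (h : List.Lex (· < ·) a b) :
    a <+: b ∨ ∃ i, i < a.length ∧ i < b.length ∧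
      (∀ j < i, a.getD j default = b.getD j default) ∧
      a.getD i default < b.getD i default := by
  induction h with
  | nil => left; exact List.nil_prefix
  | @rel a l₁ b l₂ hab => right; exact ⟨0, by simp, by simp, by omega, by simpa using hab⟩
  | @cons a l₁ l₂ h ih =>
    rcases ih with h1 | ⟨i, h1, h2, h3, h4⟩
    · left; exact List.cons_prefix_cons.mpr ⟨rfl, h1⟩
    · right
      refine ⟨i + 1, by simpa using h1, by simpa using h2, ?_, by simpa using h4⟩
      intro j hj
      cases j with
      | zero => simp
      | succ j => simpa using h3 j (by omega)

/-- Claim 3: for a Lyndon word `x` and a proper non-empty prefix `u` of `x`,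
`(x^k u)^∞ < x^∞`, i.e. `x^k u ≺ x^k`, for every `k ≥ 1`. -/
theorem claim3_power_prefix_prec {α : Type*} [LinearOrder α] [Inhabited α]
    (x u : List α) (k : ℕ) (hx : IsLyndon x)
    (hu : u ≠ []) (hu' : u ≠ x) (hupx : u <+: x) (hk : 1 ≤ k) :
    InfLt (infWord (wpow x k ++ u)) (infWord x) ∧
    Prec (wpow x k ++ u) (wpow x k) := by
  obtain ⟨hxne, hlyn⟩ := hx
  obtain ⟨m, hm⟩ : ∃ m, m = u.length := ⟨_, rfl⟩
  have hm0 : 0 < m := hm ▸ List.length_pos_iff.mpr hu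
  have hmx : m < x.length := by
    rcases lt_or_eq_of_le hupx.length_le with h | h
    · omega
    · exact absurd (List.prefix_iff_eq_take.mp hupx ▸ by simp [h]) hu'
  have hxlen : 0 < x.length := by omega
  have hut : u = x.take m := by
    obtain ⟨t, ht⟩ := hupx
    rw [← ht, hm]; simp
  obtain ⟨v, hv⟩ : ∃ v, v = x.drop m := ⟨_, rfl⟩
  have hvlen : v.length = x.length - m := by simp [hv]
  have hlex : List.Lex (· < ·) x v := by
    apply hlyn
    · simp [hv]; omega
    · intro h; have := congrArg List.length h; simp [hvlen] at this; omega
    · rw [hv]; exact List.drop_suffix m x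
  have hvgetD : ∀ r, v.getD r default = x.getD (m + r) default := by
    intro r
    simp [hv, List.getD_eq_getElem?_getD, List.getElem?_drop]
  rcases lex_char hlex with hpre | ⟨i, hi1, hi2, hagree, hlt⟩
  · exfalso
    have := hpre.length_le
    simp [hvlen] at this; omega
  have hiv : i < x.length - m := by rwa [hvlen] at hi2
  obtain ⟨w, hw⟩ : ∃ w, w = wpow x k ++ u := ⟨_, rfl⟩
  have hcomm : x.length * k = k * x.length := Nat.mul_comm _ _
  have hkx : x.length ≤ k * x.length := Nat.le_mul_of_pos_left _ hk
  have hwlen : w.length = k * x.length + m := by rw [hw]; simp [wpow_length]; omega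
  have hwlen0 : 0 < w.length := by omega
  have hwgetD : ∀ j, j < w.length → w.getD j default = x.getD (j % x.length) default := by
    intro j hj
    rw [hwlen] at hj
    rcases lt_or_ge j (k * x.length) with h | h
    · rw [hw, getD_append_left' _ _ _ (by rw [wpow_length]; exact h)]
      exact wpow_getD x k j h
    · rw [hw, getD_append_right' _ _ _ (by rw [wpow_length]; exact h)]
      have hr : j - k * x.length < m := by omega
      have hje : j = (j - k * x.length) + x.length * k := by omega
      have hmod : j % x.length = j - k * x.length := by
        conv_lhs => rw [hje]
        rw [Nat.add_mul_mod_self_left, Nat.mod_eq_of_lt (by omega)]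
      rw [hmod, wpow_length, hut]
      simp only [List.getD_eq_getElem?_getD]
      rw [List.getElem?_take_of_lt hr]
  obtain ⟨N, hN⟩ : ∃ N, N = k * x.length + m + i := ⟨_, rfl⟩
  have key : InfLt (infWord w) (infWord x) := by
    refine ⟨N, ?_, ?_⟩
    · intro j hj
      simp only [infWord]
      rcases lt_or_ge j w.length with h | h
      · rw [Nat.mod_eq_of_lt h, hwgetD j h]
      · have hr : j - w.length < i := by omega
        have hjmodw : j % w.length = j - w.length := by
          rw [Nat.mod_eq_sub_mod h, Nat.mod_eq_of_lt (by omega)]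
        have hje : j = (m + (j - w.length)) + x.length * k := by omega
        have hjmodx : j % x.length = m + (j - w.length) := by
          conv_lhs => rw [hje]
          rw [Nat.add_mul_mod_self_left, Nat.mod_eq_of_lt (by omega)]
        rw [hjmodw, hjmodx, hwgetD _ (by omega),
          Nat.mod_eq_of_lt (by omega), ← hvgetD]
        exact hagree _ hr
    · simp only [infWord]
      have h1 : N % w.length = i := by
        have hNe : N = i + w.length * 1 := by omega
        conv_lhs => rw [hNe]
        rw [Nat.add_mul_mod_self_left, Nat.mod_eq_of_lt (by omega)]
      have h2 : N % x.length = m + i := by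
        have hNe : N = (m + i) + x.length * k := by omega
        conv_lhs => rw [hNe]
        rw [Nat.add_mul_mod_self_left, Nat.mod_eq_of_lt (by omega)]
      rw [h1, h2, hwgetD i (by omega), Nat.mod_eq_of_lt (by omega), ← hvgetD i]
      exact hlt
  have hinfpow : infWord (wpow x k) = infWord x := by
    funext j
    simp only [infWord, wpow_length]
    have hk0 : 0 < k * x.length := Nat.mul_pos hk hxlen
    rw [wpow_getD x k _ (Nat.mod_lt _ hk0),
      Nat.mod_mod_of_dvd j ⟨k, (Nat.mul_comm _ _)⟩]
  rw [← hw]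
  exact ⟨key, Or.inl (by rw [hinfpow]; exact key)⟩
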